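/- Reduction of the 5-day cycle multi-period newsvendor problem: suppose the deviation distribution on day t is μ_{t mod 5}, where μ_0, ..., μ_4 are probability mass functions on Z_δ, and set E_b(t,a) := ∑_{d∈Z_δ} μ_b(d)·Rew_t(a,d) and G_b(a') := ∑_{d∈Z_δ} μ_b(d)·((min(d, a') − min(d, 0))·C_s − a'·C_p) for b ∈ {0,1,2,3,4}. Then for every t ∈ ℕ and a' ∈ Z_δ, E_{t mod 5}(t, F_t + a') − E_{t mod 5}(t, F_t) = G_{t mod 5}(a'); consequently, if for each b ∈ {0,...,4} the integer n*_b ∈ Z_δ maximizes G_b over Z_δ, then for every day t the order a_t := F_t + n*_{t mod 5} maximizes E_{t mod 5}(t, ·) over F_t + Z_δ. -/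

import Mathlib

/-- The reward of ordering `a` newspapers on day `t` under deviation `d`:
`Rew_t(a,d) = min(F_t + d, a)·C_s − a·C_p`. -/
noncomputable def Rew (F : ℕ → ℕ) (Cs Cp : ℝ) (t : ℕ) (a d : ℤ) : ℝ :=
  ((min ((F t : ℤ) + d) a : ℤ) : ℝ) * Cs - (a : ℝ) * Cp

/-- The expected reward `E(t,a) = ∑_{d ∈ Z_δ} μ(d)·Rew_t(a,d)`. -/
noncomputable def Erw (F : ℕ → ℕ) (Z : Finset ℤ) (μ : ℤ → ℝ) (Cs Cp : ℝ)
    (t : ℕ) (a : ℤ) : ℝ :=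
  ∑ d ∈ Z, μ d * Rew F Cs Cp t a d

/-- The admissible orders on day `t`: the set `F_t + Z_δ`. -/
def Acts (F : ℕ → ℕ) (Z : Finset ℤ) (t : ℕ) : Finset ℤ :=
  Z.image (fun d => (F t : ℤ) + d)

/-- The shaped bandit reward for the weekday-`b` deviation distribution `μb b`:
`G_b(a') = ∑_{d ∈ Z_δ} μ_b(d)·((min(d,a') − min(d,0))·C_s − a'·C_p)`. -/
noncomputable def Gban (Z : Finset ℤ) (μ : ℤ → ℝ) (Cs Cp : ℝ) (a' : ℤ) : ℝ :=
  ∑ d ∈ Z, μ d * (((min d a' - min d 0 : ℤ) : ℝ) * Cs - (a' : ℝ) * Cp)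

open Fin.NatCast

/-- Reduction of the 5-day cycle multi-period newsvendor problem: with
the deviation distribution on day `t` given by `μ_{t mod 5}` and
`E_b(t,a) = ∑_d μ_b(d)·Rew_t(a,d)`, we have
`E_{t mod 5}(t, F_t + a') − E_{t mod 5}(t, F_t) = G_{t mod 5}(a')` for every day `t` and
`a' ∈ Z_δ`; consequently, if `n*_b ∈ Z_δ` maximizes `G_b` over `Z_δ` for each weekday
`b`, then on every day `t` the order `F_t + n*_{t mod 5}` maximizes `E_{t mod 5}(t, ·)`
over `F_t + Z_δ`. -/

lemma erw_diff (F : ℕ → ℕ) (Z : Finset ℤ) (μ : ℤ → ℝ) (Cs Cp : ℝ) (t : ℕ) (a' : ℤ) :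
    Erw F Z μ Cs Cp t ((F t : ℤ) + a') - Erw F Z μ Cs Cp t (F t : ℤ) =
      Gban Z μ Cs Cp a' := by
  unfold Erw Gban Rew
  rw [← Finset.sum_sub_distrib]
  apply Finset.sum_congr rfl
  intro d _
  rw [← mul_sub]
  congr 1
  have h1 : min ((F t : ℤ) + d) ((F t : ℤ) + a') = (F t : ℤ) + min d a' := by omega
  have h2 : min ((F t : ℤ) + d) ((F t : ℤ)) = (F t : ℤ) + min d 0 := by omega
  rw [h1, h2]
  push_cast
  ring

theorem newsvendor_five_day_cycle_reduction
    (F : ℕ → ℕ) (Z : Finset ℤ) (hZ0 : (0 : ℤ) ∈ Z)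
    (μb : Fin 5 → ℤ → ℝ)
    (hμ0 : ∀ (b : Fin 5), ∀ d ∈ Z, 0 ≤ μb b d)
    (hμ1 : ∀ b : Fin 5, ∑ d ∈ Z, μb b d = 1)
    (Cp Cs : ℝ) (hCp : 0 < Cp) (hCpCs : Cp < Cs) :
    (∀ (t : ℕ) (a' : ℤ), a' ∈ Z →
      Erw F Z (μb (t : Fin 5)) Cs Cp t ((F t : ℤ) + a') -
          Erw F Z (μb (t : Fin 5)) Cs Cp t (F t : ℤ) =
        Gban Z (μb (t : Fin 5)) Cs Cp a') ∧
    (∀ nstar : Fin 5 → ℤ,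
      (∀ b : Fin 5, nstar b ∈ Z ∧
        ∀ m ∈ Z, Gban Z (μb b) Cs Cp m ≤ Gban Z (μb b) Cs Cp (nstar b)) →
      ∀ (t : ℕ), ∀ b ∈ Acts F Z t,
        Erw F Z (μb (t : Fin 5)) Cs Cp t b ≤
          Erw F Z (μb (t : Fin 5)) Cs Cp t ((F t : ℤ) + nstar (t : Fin 5))) := by
  constructor
  · intro t a' _
    exact erw_diff F Z (μb (t : Fin 5)) Cs Cp t a'
  · intro nstar hn t b hb
    obtain ⟨m, hm, rfl⟩ := Finset.mem_image.mp hb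
    have h1 := erw_diff F Z (μb (t : Fin 5)) Cs Cp t m
    have h2 := erw_diff F Z (μb (t : Fin 5)) Cs Cp t (nstar (t : Fin 5))
    have h3 := (hn (t : Fin 5)).2 m hm
    linarith
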